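/- Let (G,E) be a regular self-similar groupoid action on a finite directed graph E with no sources. Then for every finite subset F ⊆ G there exists k ∈ ℕ such that for all g, h ∈ F with d(g) = d(h) and every finite path μ with r(μ) = d(g) and |μ| ≥ k, if g·μ = h·μ then g|_μ = h|_μ. -/

import Mathlib

/-!
Self-similar groupoid actions on finite directed graphs, following
Brownlowe–Buss–Gonçalves–Hume–Sims–Whittaker,
"KK-duality for self-similar groupoid actions on graphs".

A directed graph is given by a vertex type `V`, an edge type `E` and
range/source maps `rE sE : E → V`.  A finite path is modelled as a list of
edges together with a base vertex (its range): the list `[e₁, …, eₙ]` is the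
path `e₁ … eₙ` read from left to right, so consecutive edges satisfy
`sE eᵢ = rE eᵢ₊₁`.  The groupoid of a self-similar action, its partial
multiplication, the action on finite paths and the restriction maps are
modelled as total functions whose values are only constrained (by the axioms
of the structure `SSA`) on their natural domains.
-/

universe u

namespace SSG

variable {V E : Type u}

/-- `l` is a trail: the source of each edge is the range of the next. -/
def IsTrail (rE sE : E → V) (l : List E) : Prop :=
  List.Chain' (fun e f => sE e = rE f) l

/-- `FromV rE sE v l` : `l` is a finite path whose range (leftmost vertex) is `v`. -/
def FromV (rE sE : E → V) (v : V) (l : List E) : Prop :=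
  IsTrail rE sE l ∧ ∀ e, l.head? = some e → rE e = v

/-- The source (rightmost vertex) of the finite path `l` with range `v`. -/
def trailSrc (sE : E → V) (v : V) (l : List E) : V :=
  l.getLast?.elim v sE

/-- A (faithful) self-similar groupoid action `(G, E)` on the directed graph with
vertices `V`, edges `E`, range map `rE` and source map `sE`.  Here `d`/`c` are
the domain/codomain maps of the groupoid `G` (its units are `unit v` for
`v : V`), `mul h g` is the composite `h ∘ g` (junk unless `d h = c g`),
`act g l` is `g · l` for finite paths `l` with range `d g` (junk otherwise)
and `res g l` is the restriction `g|_l` (junk otherwise). -/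
structure SSA (V E : Type u) (rE sE : E → V) : Type (u + 1) where
  G : Type u
  d : G → V
  c : G → V
  mul : G → G → G
  inv : G → G
  unit : V → G
  act : G → List E → List E
  res : G → List E → G
  d_unit : ∀ v, d (unit v) = v
  c_unit : ∀ v, c (unit v) = v
  d_mul : ∀ g h, d h = c g → d (mul h g) = d g
  c_mul : ∀ g h, d h = c g → c (mul h g) = c h
  mul_assoc : ∀ g h k, d h = c g → d k = c h → mul k (mul h g) = mul (mul k h) g
  unit_mul : ∀ g, mul (unit (c g)) g = g
  mul_unit : ∀ g, mul g (unit (d g)) = g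
  d_inv : ∀ g, d (inv g) = c g
  c_inv : ∀ g, c (inv g) = d g
  inv_mul : ∀ g, mul (inv g) g = unit (d g)
  mul_inv : ∀ g, mul g (inv g) = unit (c g)
  act_fromV : ∀ g l, FromV rE sE (d g) l → FromV rE sE (c g) (act g l)
  act_length : ∀ g l, FromV rE sE (d g) l → (act g l).length = l.length
  act_unit : ∀ v l, FromV rE sE v l → act (unit v) l = l
  act_mul : ∀ g h l, d h = c g → FromV rE sE (d g) l →
    act (mul h g) l = act h (act g l)
  faithful : ∀ g h, d g = d h → c g = c h →
    (∀ l, FromV rE sE (d g) l → act g l = act h l) → g = h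
  res_nil : ∀ g, res g [] = g
  d_res : ∀ g l, FromV rE sE (d g) l → d (res g l) = trailSrc sE (d g) l
  c_res : ∀ g l, FromV rE sE (d g) l → c (res g l) = trailSrc sE (c g) (act g l)
  res_append : ∀ g l m, FromV rE sE (d g) l →
    FromV rE sE (trailSrc sE (d g) l) m → res g (l ++ m) = res (res g l) m
  act_append : ∀ g l m, FromV rE sE (d g) l →
    FromV rE sE (trailSrc sE (d g) l) m →
    act g (l ++ m) = act g l ++ act (res g l) m

variable {rE sE : E → V}

/-- `F` is a contracting core for the self-similar groupoid action `A`. -/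
def SSA.IsCore (A : SSA V E rE sE) (F : Set A.G) : Prop :=
  F.Finite ∧ ∀ g : A.G, ∃ n : ℕ, ∀ l : List E,
    FromV rE sE (A.d g) l → l.length = n → A.res g l ∈ F

/-- The action is contracting if it admits a contracting core. -/
def SSA.Contracting (A : SSA V E rE sE) : Prop :=
  ∃ F : Set A.G, A.IsCore F

/-- The nucleus: the intersection of all contracting cores. -/
def SSA.nucleus (A : SSA V E rE sE) : Set A.G :=
  ⋂₀ {F : Set A.G | A.IsCore F}

/-- The action is recurrent. -/
def SSA.Recurrent (A : SSA V E rE sE) : Prop :=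
  ∀ e f : E, ∀ h : A.G, A.d h = sE e → A.c h = sE f →
    ∃ g : A.G, A.d g = rE e ∧ A.act g [e] = [f] ∧ A.res g [e] = h

/-- The action is level-transitive: any two paths of the same length lie in
one orbit. -/
def SSA.LevelTransitive (A : SSA V E rE sE) : Prop :=
  ∀ (v w : V) (l m : List E), FromV rE sE v l → FromV rE sE w m →
    l.length = m.length → ∃ g : A.G, A.d g = v ∧ A.c g = w ∧ A.act g l = m

/-- Every element of the groupoid is a finite composable product of
elements of `H`. -/
def SSA.GeneratedBy (A : SSA V E rE sE) (H : Set A.G) : Prop :=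
  ∀ g : A.G, ∃ (h : A.G) (t : List A.G), h ∈ H ∧ (∀ k ∈ t, k ∈ H) ∧
    List.Chain' (fun a b => A.d a = A.c b) (h :: t) ∧ t.foldl A.mul h = g

/-- The groupoid of the action is finitely generated. -/
def SSA.FinitelyGenerated (A : SSA V E rE sE) : Prop :=
  ∃ H : Set A.G, H.Finite ∧ A.GeneratedBy H

/-- The graph has no sources: every vertex receives an edge. -/
def NoSources (rE : E → V) : Prop := ∀ v : V, ∃ e : E, rE e = v

/-- The graph has no sinks: every vertex emits an edge. -/
def NoSinks (sE : E → V) : Prop := ∀ v : V, ∃ e : E, sE e = v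

/-- The graph is strongly connected: it has an edge, and any ordered pair of
vertices is joined by a finite path. -/
def StronglyConnected (rE sE : E → V) : Prop :=
  Nonempty E ∧ ∀ v w : V, ∃ l : List E, FromV rE sE v l ∧ trailSrc sE v l = w

/-- Right-infinite paths `y₁ y₂ y₃ …` (here `y k` is the edge `y_{k+1}`). -/
def RightPath (rE sE : E → V) : Type u :=
  {y : ℕ → E // ∀ k, sE (y k) = rE (y (k + 1))}

/-- The initial segment `y₁ … yₙ` of a right-infinite path. -/
def RightPath.trunc (y : RightPath rE sE) (n : ℕ) : List E :=
  (List.range n).map y.1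

/-- The action is regular: whenever `g` fixes a right-infinite path `y`
(equivalently, all its initial segments), `g` acts trivially on some cylinder
neighbourhood of `y`: some initial segment `μ` of `y` satisfies `g·μ = μ` and
`g|_μ = s(μ)`. -/
def SSA.Regular (A : SSA V E rE sE) : Prop :=
  ∀ (g : A.G) (y : RightPath rE sE), A.d g = rE (y.1 0) →
    (∀ n : ℕ, A.act g (y.trunc n) = y.trunc n) →
    ∃ n : ℕ, A.act g (y.trunc n) = y.trunc n ∧
      A.res g (y.trunc n) = A.unit (trailSrc sE (A.d g) (y.trunc n))

/-- Left-infinite paths `… x₋₂ x₋₁` (here `x k` is the edge `x_{-(k+1)}`). -/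
def LeftPath (rE sE : E → V) : Type u :=
  {x : ℕ → E // ∀ k, sE (x (k + 1)) = rE (x k)}

instance [TopologicalSpace E] : TopologicalSpace (LeftPath rE sE) :=
  inferInstanceAs (TopologicalSpace {x : ℕ → E // ∀ k, sE (x (k + 1)) = rE (x k)})

/-- The finite path `x₋ₘ … x₋₁`. -/
def LeftPath.trunc (x : LeftPath rE sE) (m : ℕ) : List E :=
  ((List.range m).reverse).map x.1

/-- The shift on left-infinite paths, deleting the rightmost edge. -/
def LeftPath.shift (x : LeftPath rE sE) : LeftPath rE sE :=
  ⟨fun k => x.1 (k + 1), fun k => x.2 (k + 1)⟩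

/-- Asymptotic equivalence of left-infinite paths: some sequence `(gₙ)` in the
groupoid with finitely many distinct values satisfies
`gₙ · (xₙ … x₋₁) = yₙ … y₋₁` for all `n < 0`. -/
def SSA.AsympEq (A : SSA V E rE sE) (x y : LeftPath rE sE) : Prop :=
  ∃ g : ℕ → A.G, (Set.range g).Finite ∧
    (∀ m : ℕ, A.d (g m) = rE (x.1 m)) ∧
    (∀ m : ℕ, A.act (g m) (x.trunc (m + 1)) = y.trunc (m + 1))

/-- The cylinder set `Z(l]` of left-infinite paths ending in `l`. -/
def cylL (rE sE : E → V) (l : List E) : Set (LeftPath rE sE) :=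
  {x : LeftPath rE sE | x.trunc l.length = l}

/-- The basic subset `U_l` of the limit space attached to a finite path `l`
with range `v`. -/
def SSA.limitU (A : SSA V E rE sE) (v : V) (l : List E) :
    Set (Quot A.AsympEq) :=
  {z : Quot A.AsympEq | ∀ x : LeftPath rE sE, Quot.mk A.AsympEq x = z →
    ∃ g ∈ A.nucleus, A.d g = v ∧ x ∈ cylL rE sE (A.act g l)}

/-- Bi-infinite paths `… x₋₁ x₀ x₁ …`. -/
def BiPath (rE sE : E → V) : Type u :=
  {x : ℤ → E // ∀ k : ℤ, sE (x k) = rE (x (k + 1))}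

instance [TopologicalSpace E] : TopologicalSpace (BiPath rE sE) :=
  inferInstanceAs (TopologicalSpace {x : ℤ → E // ∀ k : ℤ, sE (x k) = rE (x (k + 1))})

/-- The finite segment `xₙ x_{n+1} … x_{n+m-1}` of a bi-infinite path. -/
def BiPath.seg (x : BiPath rE sE) (n : ℤ) (m : ℕ) : List E :=
  (List.range m).map fun i => x.1 (n + i)

/-- Asymptotic equivalence of bi-infinite paths: some sequence `(gₙ)_{n ∈ ℤ}`
with finitely many distinct values satisfies
`gₙ · (xₙ x_{n+1} …) = yₙ y_{n+1} …` for all `n`. -/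
def SSA.AsympEqZ (A : SSA V E rE sE) (x y : BiPath rE sE) : Prop :=
  ∃ g : ℤ → A.G, (Set.range g).Finite ∧
    (∀ n : ℤ, A.d (g n) = rE (x.1 n)) ∧
    (∀ (n : ℤ) (m : ℕ), A.act (g n) (x.seg n m) = y.seg n m)

/-- The left-infinite path `x(-∞, n) = … x_{n-1} xₙ` of a bi-infinite path. -/
def BiPath.tail (x : BiPath rE sE) (n : ℤ) : LeftPath rE sE :=
  ⟨fun k => x.1 (n - k), by
    intro k
    have h := x.2 (n - ((k : ℤ) + 1))
    have h2 : n - ((k : ℤ) + 1) + 1 = n - (k : ℤ) := by ring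
    have h3 : (n - ((k + 1 : ℕ) : ℤ)) = n - ((k : ℤ) + 1) := by push_cast; ring
    show sE (x.1 (n - ((k + 1 : ℕ) : ℤ))) = rE (x.1 (n - (k : ℤ)))
    rw [h3, ← h2]
    exact h⟩

/-- The translation `τ` on bi-infinite paths, `(τ x)ₙ = x_{n-1}`. -/
def BiPath.translate (x : BiPath rE sE) : BiPath rE sE :=
  ⟨fun m => x.1 (m - 1), by
    intro k
    have h := x.2 (k - 1)
    have h2 : (k - 1 + 1 : ℤ) = k + 1 - 1 := by ring
    rw [h2] at h
    exact h⟩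

/-- The shift homeomorphism `σ̃_∞` on the inverse limit `lim← (J, T)`. -/
def solShift {J : Type*} (T : J → J)
    (z : {z : ℕ → J // ∀ n, T (z (n + 1)) = z n}) :
    {z : ℕ → J // ∀ n, T (z (n + 1)) = z n} :=
  ⟨fun n => match n with
    | 0 => T (z.1 0)
    | m + 1 => z.1 m,
   fun n => match n with
    | 0 => rfl
    | m + 1 => z.2 m⟩

/-- The distance function of a bundled metric space. -/
def mdist {Y : Type*} (m : MetricSpace Y) (a b : Y) : ℝ := by
  letI := m; exact dist a b

/-- The open ball of a bundled metric space. -/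
def mball {Y : Type*} (m : MetricSpace Y) (a : Y) (r : ℝ) : Set Y := by
  letI := m; exact Metric.ball a r

/-- The topology induced by a bundled metric space. -/
def mtop {Y : Type*} (m : MetricSpace Y) : TopologicalSpace Y := by
  letI := m; exact inferInstance


lemma fromV_nil (v : V) : FromV rE sE v [] :=
  ⟨List.isChain_nil, by simp⟩

lemma trailSrc_nil (v : V) : trailSrc sE v ([] : List E) = v := rfl

lemma fromV_rE_head {v : V} {l : List E} (h : FromV rE sE v l) (hne : l ≠ []) :
    rE (l.head hne) = v :=
  h.2 _ (List.head?_eq_head hne)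

lemma trailSrc_ne_nil {v : V} {l : List E} (hne : l ≠ []) :
    trailSrc sE v l = sE (l.getLast hne) := by
  rw [trailSrc, List.getLast?_eq_getLast hne]; rfl

lemma fromV_append_iff (v : V) (l m : List E) :
    FromV rE sE v (l ++ m) ↔ FromV rE sE v l ∧ FromV rE sE (trailSrc sE v l) m := by
  constructor
  · rintro ⟨ht, hh⟩
    rw [IsTrail, List.Chain', List.isChain_append] at ht
    obtain ⟨h1, h2, h3⟩ := ht
    refine ⟨⟨h1, ?_⟩, h2, ?_⟩
    · intro e he
      apply hh
      cases l with
      | nil => simp at he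
      | cons a l' => simpa using he
    · intro e he
      cases l with
      | nil => exact hh e (by simpa using he)
      | cons a l' =>
        have hne : (a :: l') ≠ ([] : List E) := by simp
        rw [trailSrc_ne_nil hne]
        exact (h3 _ (List.getLast?_eq_getLast hne ▸ rfl) e he).symm
  · rintro ⟨⟨ht1, hh1⟩, ⟨ht2, hh2⟩⟩
    constructor
    · rw [IsTrail, List.Chain', List.isChain_append]
      refine ⟨ht1, ht2, ?_⟩
      intro x hx y hy
      cases l with
      | nil => simp at hx
      | cons a l' =>
        have hne : (a :: l') ≠ ([] : List E) := by simp
        rw [List.getLast?_eq_getLast hne] at hx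
        have hx' : (a :: l').getLast hne = x := by simpa using hx
        subst hx'
        have := hh2 y hy
        rw [trailSrc_ne_nil hne] at this
        exact this.symm
    · intro e he
      cases l with
      | nil => exact hh2 e (by simpa using he) |>.trans (trailSrc_nil v)
      | cons a l' =>
        apply hh1
        simpa using he


section Aux

lemma exists_infinite_fiber_of_finite_range {α : Type*} (f : ℕ → α)
    (h : (Set.range f).Finite) : ∃ a, {n | f n = a}.Infinite := by
  by_contra hc
  push_neg at hc
  have hu : (⋃ a ∈ Set.range f, {n | f n = a}) = (Set.univ : Set ℕ) := by
    ext n; simp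
  have : (Set.univ : Set ℕ).Finite := by
    rw [← hu]
    exact h.biUnion (fun a _ => hc a)
  exact Set.infinite_univ this

variable {A : SSA V E rE sE}

lemma SSA.act_nil (A : SSA V E rE sE) (g : A.G) : A.act g [] = [] :=
  List.length_eq_zero_iff.mp (A.act_length g [] (fromV_nil _))

lemma SSA.res_unit' (A : SSA V E rE sE) (v : V) (l : List E) (h : FromV rE sE v l) :
    A.res (A.unit v) l = A.unit (trailSrc sE v l) := by
  have hd : A.d (A.unit v) = v := A.d_unit v
  have hl' : FromV rE sE (A.d (A.unit v)) l := by rw [hd]; exact h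
  have hact : A.act (A.unit v) l = l := A.act_unit v l h
  apply A.faithful
  · rw [A.d_res _ l hl', hd, A.d_unit]
  · rw [A.c_res _ l hl', A.c_unit, A.c_unit, hact]
  · intro m hm
    rw [A.d_res _ l hl', hd] at hm
    have hm' : FromV rE sE (trailSrc sE (A.d (A.unit v)) l) m := by rw [hd]; exact hm
    have hlm : FromV rE sE v (l ++ m) := (fromV_append_iff v l m).mpr ⟨h, hm⟩
    have e1 : A.act (A.unit v) (l ++ m) =
        A.act (A.unit v) l ++ A.act (A.res (A.unit v) l) m :=
      A.act_append _ l m hl' hm'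
    rw [A.act_unit v (l ++ m) hlm, hact] at e1
    have e2 : A.act (A.res (A.unit v) l) m = m := (List.append_cancel_left e1.symm)
    rw [e2, A.act_unit _ m hm]

lemma SSA.res_mul' (A : SSA V E rE sE) (g h : A.G) (l : List E)
    (hcomp : A.d h = A.c g) (hl : FromV rE sE (A.d g) l) :
    A.res (A.mul h g) l = A.mul (A.res h (A.act g l)) (A.res g l) := by
  have hda : A.d (A.mul h g) = A.d g := A.d_mul g h hcomp
  have hca : A.c (A.mul h g) = A.c h := A.c_mul g h hcomp
  have hla : FromV rE sE (A.d (A.mul h g)) l := by rw [hda]; exact hl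
  have hgl : FromV rE sE (A.c g) (A.act g l) := A.act_fromV g l hl
  have hhl : FromV rE sE (A.d h) (A.act g l) := by rw [hcomp]; exact hgl
  have hdresg : A.d (A.res g l) = trailSrc sE (A.d g) l := A.d_res g l hl
  have hcresg : A.c (A.res g l) = trailSrc sE (A.c g) (A.act g l) := A.c_res g l hl
  have hdresh : A.d (A.res h (A.act g l)) = trailSrc sE (A.d h) (A.act g l) :=
    A.d_res h _ hhl
  have hcomp2 : A.d (A.res h (A.act g l)) = A.c (A.res g l) := by
    rw [hdresh, hcresg, hcomp]
  have hactmul : A.act (A.mul h g) l = A.act h (A.act g l) := A.act_mul g h l hcomp hl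
  apply A.faithful
  · rw [A.d_res _ l hla, A.d_mul _ _ hcomp2, hdresg, hda]
  · rw [A.c_res _ l hla, A.c_mul _ _ hcomp2, A.c_res h _ hhl, hca, hactmul]
  · intro m hm
    rw [A.d_res _ l hla, hda] at hm
    have hm2 : FromV rE sE (A.d (A.res g l)) m := by rw [hdresg]; exact hm
    have hma : FromV rE sE (trailSrc sE (A.d (A.mul h g)) l) m := by rw [hda]; exact hm
    have hlm : FromV rE sE (A.d g) (l ++ m) := (fromV_append_iff _ l m).mpr ⟨hl, hm⟩
    have hlma : FromV rE sE (A.d (A.mul h g)) (l ++ m) := by rw [hda]; exact hlm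
    have h5 : FromV rE sE (trailSrc sE (A.d h) (A.act g l)) (A.act (A.res g l) m) := by
      have := A.act_fromV (A.res g l) m hm2
      rw [hcresg, ← hcomp] at this
      exact this
    have e1 : A.act (A.mul h g) (l ++ m) =
        A.act (A.mul h g) l ++ A.act (A.res (A.mul h g) l) m :=
      A.act_append _ l m hla hma
    have e2 : A.act (A.mul h g) (l ++ m) = A.act h (A.act g (l ++ m)) :=
      A.act_mul g h (l ++ m) hcomp hlm
    have e3 : A.act g (l ++ m) = A.act g l ++ A.act (A.res g l) m :=
      A.act_append g l m hl hm
    have e4 : A.act h (A.act g l ++ A.act (A.res g l) m) =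
        A.act h (A.act g l) ++ A.act (A.res h (A.act g l)) (A.act (A.res g l) m) :=
      A.act_append h _ _ hhl h5
    have e6 : A.act (A.mul h g) l ++ A.act (A.res (A.mul h g) l) m =
        A.act h (A.act g l) ++ A.act (A.res h (A.act g l)) (A.act (A.res g l) m) := by
      rw [← e1, e2, e3, e4]
    rw [hactmul] at e6
    have e7 := List.append_cancel_left e6
    rw [e7, A.act_mul (A.res g l) (A.res h (A.act g l)) m hcomp2 hm2]

lemma SSA.eq_inv_of_mul' (A : SSA V E rE sE) {b c : A.G} (hd : A.d b = A.c c)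
    (h : A.mul b c = A.unit (A.d c)) : b = A.inv c := by
  have h1 : b = A.mul b (A.unit (A.d b)) := (A.mul_unit b).symm
  rw [hd, ← A.mul_inv c] at h1
  rw [A.mul_assoc (A.inv c) c b (A.c_inv c).symm hd, h, ← A.c_inv c, A.unit_mul] at h1
  exact h1

lemma SSA.eq_of_inv_mul' (A : SSA V E rE sE) {b c : A.G} (hc : A.c b = A.c c)
    (hd : A.d b = A.d c)
    (h : A.mul (A.inv c) b = A.unit (A.d b)) : b = c := by
  have h1 : b = A.mul (A.unit (A.c b)) b := (A.unit_mul b).symm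
  rw [hc, ← A.mul_inv c] at h1
  have hassoc : A.mul c (A.mul (A.inv c) b) = A.mul (A.mul c (A.inv c)) b :=
    A.mul_assoc b (A.inv c) c (by rw [A.d_inv, hc]) (A.c_inv c).symm
  rw [← hassoc, h, hd] at h1
  rw [h1, A.mul_unit c]

lemma SSA.res_act_inv' (A : SSA V E rE sE) (h : A.G) (l : List E)
    (hl : FromV rE sE (A.d h) l) :
    A.res (A.inv h) (A.act h l) = A.inv (A.res h l) := by
  have hcomp : A.d (A.inv h) = A.c h := A.d_inv h
  have key := A.res_mul' h (A.inv h) l hcomp hl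
  rw [A.inv_mul h, A.res_unit' (A.d h) l hl] at key
  apply A.eq_inv_of_mul'
  · rw [A.d_res _ _ (by rw [hcomp]; exact A.act_fromV h l hl),
      A.c_res h l hl, hcomp]
  · rw [← key, A.d_res h l hl]

lemma SSA.res_eq_of_act_eq' (A : SSA V E rE sE) (g h : A.G) (l : List E)
    (hd : A.d g = A.d h) (hc : A.c g = A.c h)
    (hl : FromV rE sE (A.d g) l)
    (hact : A.act g l = A.act h l)
    (hres : A.res (A.mul (A.inv h) g) l = A.unit (trailSrc sE (A.d g) l)) :
    A.res g l = A.res h l := by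
  have hlh : FromV rE sE (A.d h) l := by rw [← hd]; exact hl
  have hcomp : A.d (A.inv h) = A.c g := by rw [A.d_inv, hc]
  have key := A.res_mul' g (A.inv h) l hcomp hl
  rw [hact, A.res_act_inv' h l hlh, hres] at key
  apply A.eq_of_inv_mul'
  · rw [A.c_res g l hl, A.c_res h l hlh, hc, hact]
  · rw [A.d_res g l hl, A.d_res h l hlh, hd]
  · rw [A.d_res g l hl, ← key]

/-- König's lemma for prefix-closed unbounded sets of lists over a finite type. -/
lemma koenig [Fintype E] (S : List E → Prop)
    (hpre : ∀ l m : List E, S (l ++ m) → S l)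
    (hlong : ∀ n : ℕ, ∃ l, S l ∧ n ≤ l.length) :
    ∃ y : ℕ → E, ∀ n, S ((List.range n).map y) := by
  classical
  set Good : List E → Prop := fun l => ∀ n : ℕ, ∃ m, S (l ++ m) ∧ n ≤ m.length with hGood
  have good0 : Good [] := by
    intro n
    obtain ⟨l, hl, hn⟩ := hlong n
    exact ⟨l, by simpa using hl, hn⟩
  have step : ∀ l, Good l → ∃ e, Good (l ++ [e]) := by
    intro l hG
    have hch : ∀ n : ℕ, ∃ m, S (l ++ m) ∧ n + 1 ≤ m.length := fun n => hG (n + 1)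
    choose m hm hlen using hch
    have hne : ∀ n, m n ≠ [] := by
      intro n h
      have := hlen n
      rw [h] at this
      simp at this
    set f : ℕ → E := fun n => (m n).head (hne n) with hf
    have hfin : (Set.range f).Finite := Set.toFinite _
    obtain ⟨e, he⟩ := exists_infinite_fiber_of_finite_range f hfin
    refine ⟨e, fun n => ?_⟩
    obtain ⟨k, hk, hnk⟩ := he.exists_gt n
    have hmk : (m k).head (hne k) :: (m k).tail = m k := List.cons_head_tail _
    have hsplit : l ++ m k = (l ++ [e]) ++ (m k).tail := by
      rw [List.append_assoc, List.singleton_append, ← hk, hmk]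
    refine ⟨(m k).tail, by rw [← hsplit]; exact hm k, ?_⟩
    have : k + 1 ≤ (m k).length := hlen k
    have hlt : (m k).tail.length = (m k).length - 1 := List.length_tail
    omega
  set fn : {l : List E // Good l} → {l : List E // Good l} :=
    fun p => ⟨p.1 ++ [Classical.choose (step p.1 p.2)],
      Classical.choose_spec (step p.1 p.2)⟩ with hfn
  set start : {l : List E // Good l} := ⟨[], good0⟩ with hstart
  set y : ℕ → E := fun n => Classical.choose (step (fn^[n] start).1 (fn^[n] start).2) with hy
  have hmu : ∀ n, (List.range n).map y = (fn^[n] start).1 := by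
    intro n
    induction n with
    | zero => simp [hstart]
    | succ n ih =>
      rw [List.range_succ, List.map_append, ih, Function.iterate_succ_apply']
      simp [hfn, hy]
  refine ⟨y, fun n => ?_⟩
  rw [hmu n]
  obtain ⟨m, hm, _⟩ := (fn^[n] start).2 0
  exact hpre _ m hm

end Aux

/-- for a regular action on a finite graph with no sources,
restrictions of elements of a finite set along long enough paths are
determined by their action on that path. -/
theorem regular_uniform_restriction
    [Fintype V] [Fintype E] (rE sE : E → V) (A : SSA V E rE sE)
    (hreg : A.Regular) (hso : NoSources rE)
    (F : Set A.G) (hF : F.Finite) :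
    ∃ k : ℕ, ∀ g ∈ F, ∀ h ∈ F, A.d g = A.d h →
      ∀ l : List E, FromV rE sE (A.d g) l → k ≤ l.length →
        A.act g l = A.act h l → A.res g l = A.res h l := by
  classical
  by_contra hcon
  push_neg at hcon
  choose g hg h hh hd l hFrom hlen hact hres using hcon
  have hrange : (Set.range (fun k => (g k, h k))).Finite := by
    apply Set.Finite.subset (hF.prod hF)
    rintro _ ⟨k, rfl⟩
    exact ⟨hg k, hh k⟩
  obtain ⟨⟨g₀, h₀⟩, hfib⟩ := exists_infinite_fiber_of_finite_range _ hrange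
  have hd₀ : A.d g₀ = A.d h₀ := by
    obtain ⟨k, hk⟩ := hfib.nonempty
    have hgk : g k = g₀ := congrArg Prod.fst hk
    have hhk : h k = h₀ := congrArg Prod.snd hk
    rw [← hgk, ← hhk]; exact hd k
  set S : List E → Prop := fun l =>
    FromV rE sE (A.d g₀) l ∧ A.act g₀ l = A.act h₀ l ∧ A.res g₀ l ≠ A.res h₀ l with hS
  have hlong : ∀ n : ℕ, ∃ l, S l ∧ n ≤ l.length := by
    intro n
    obtain ⟨k, hk, hnk⟩ := hfib.exists_gt n
    have hgk : g k = g₀ := congrArg Prod.fst hk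
    have hhk : h k = h₀ := congrArg Prod.snd hk
    refine ⟨l k, ⟨?_, ?_, ?_⟩, ?_⟩
    · rw [← hgk]; exact hFrom k
    · rw [← hgk, ← hhk]; exact hact k
    · rw [← hgk, ← hhk]; exact hres k
    · exact le_trans (le_of_lt hnk) (hlen k)
  have hpre : ∀ l m : List E, S (l ++ m) → S l := by
    rintro l m ⟨hF1, hA1, hR1⟩
    obtain ⟨hFl, hFm⟩ := (fromV_append_iff _ l m).mp hF1
    have hFlh : FromV rE sE (A.d h₀) l := by rw [← hd₀]; exact hFl
    have hFmh : FromV rE sE (trailSrc sE (A.d h₀) l) m := by rw [← hd₀]; exact hFm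
    have e1 : A.act g₀ (l ++ m) = A.act g₀ l ++ A.act (A.res g₀ l) m :=
      A.act_append g₀ l m hFl hFm
    have e2 : A.act h₀ (l ++ m) = A.act h₀ l ++ A.act (A.res h₀ l) m :=
      A.act_append h₀ l m hFlh hFmh
    have hA1' := hA1
    rw [e1, e2] at hA1'
    have hacts : A.act g₀ l = A.act h₀ l :=
      (List.append_inj hA1'
        (by rw [A.act_length g₀ l hFl, A.act_length h₀ l hFlh])).1
    refine ⟨hFl, hacts, ?_⟩
    intro hre
    apply hR1
    rw [A.res_append g₀ l m hFl hFm, A.res_append h₀ l m hFlh hFmh, hre]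
  obtain ⟨y, hy⟩ := koenig S hpre hlong
  have htrail : ∀ k, sE (y k) = rE (y (k + 1)) := by
    intro k
    have h1 := (hy (k + 2)).1.1
    rw [IsTrail, List.Chain', List.isChain_iff_getElem] at h1
    have h2 := h1 k (by simp)
    simpa using h2
  set Y : RightPath rE sE := ⟨y, htrail⟩ with hY
  have htrunc : ∀ n, Y.trunc n = (List.range n).map y := fun n => rfl
  have hFromn : ∀ n, FromV rE sE (A.d g₀) (Y.trunc n) := fun n => (hy n).1
  have hactn : ∀ n, A.act g₀ (Y.trunc n) = A.act h₀ (Y.trunc n) := fun n => (hy n).2.1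
  have ht1 : Y.trunc 1 = [y 0] := by simp [htrunc 1, List.range_succ]
  have hF1 : FromV rE sE (A.d g₀) [y 0] := by rw [← ht1]; exact hFromn 1
  have hd0 : A.d g₀ = rE (y 0) := (hF1.2 (y 0) rfl).symm
  have hc₀ : A.c g₀ = A.c h₀ := by
    have hFg : FromV rE sE (A.c g₀) (A.act g₀ [y 0]) := A.act_fromV g₀ _ hF1
    have hFh : FromV rE sE (A.c h₀) (A.act h₀ [y 0]) :=
      A.act_fromV h₀ _ (by rw [← hd₀]; exact hF1)
    have hacteq : A.act g₀ [y 0] = A.act h₀ [y 0] := by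
      have := hactn 1; rwa [ht1] at this
    have hlen1 : (A.act g₀ [y 0]).length = 1 := by
      rw [A.act_length g₀ _ hF1]; rfl
    have hne : A.act g₀ [y 0] ≠ [] := by
      intro hn; rw [hn] at hlen1; simp at hlen1
    have hFh' : FromV rE sE (A.c h₀) (A.act g₀ [y 0]) := by rw [hacteq]; exact hFh
    rw [← fromV_rE_head hFg hne, ← fromV_rE_head hFh' hne]
  set a : A.G := A.mul (A.inv h₀) g₀ with ha
  have hcomp : A.d (A.inv h₀) = A.c g₀ := by rw [A.d_inv, hc₀]
  have hda : A.d a = A.d g₀ := A.d_mul g₀ (A.inv h₀) hcomp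
  have hfix : ∀ n, A.act a (Y.trunc n) = Y.trunc n := by
    intro n
    have hFn := hFromn n
    have hFnh : FromV rE sE (A.d h₀) (Y.trunc n) := by rw [← hd₀]; exact hFn
    calc A.act a (Y.trunc n) = A.act (A.inv h₀) (A.act g₀ (Y.trunc n)) :=
          A.act_mul g₀ (A.inv h₀) _ hcomp hFn
      _ = A.act (A.inv h₀) (A.act h₀ (Y.trunc n)) := by rw [hactn n]
      _ = A.act (A.mul (A.inv h₀) h₀) (Y.trunc n) :=
          (A.act_mul h₀ (A.inv h₀) _ (A.d_inv h₀) hFnh).symm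
      _ = A.act (A.unit (A.d h₀)) (Y.trunc n) := by rw [A.inv_mul h₀]
      _ = Y.trunc n := A.act_unit _ _ hFnh
  obtain ⟨n, hfixn, hresn⟩ := hreg a Y (by rw [hda, hd0]) hfix
  rw [hda] at hresn
  exact (hy n).2.2
    (A.res_eq_of_act_eq' g₀ h₀ _ hd₀ hc₀ (hFromn n) (hactn n) hresn)

end SSG
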